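/- Let ε > 0, H > 0, α_c = 1, θ ∈ ℝ, and define maps on ℂ by 𝓕u = e^{(1+i/ε)H}·u (the exact fine propagator of the spiral equation) and 𝓒u = e^{H}·e^{i(H/ε+θ)}·u (a coarse propagator that is exact in the slow variable |u| but makes a phase error θ per step). Define the parareal iterates with u₀ = 1 by u⁰ₙ = 𝓒ⁿ(1), uᵏ₀ = 1, and uᵏₙ = 𝓒(uᵏₙ₋₁) + 𝓕(uᵏ⁻¹ₙ₋₁) − 𝓒(uᵏ⁻¹ₙ₋₁). Then the first-iteration value at n = 3 satisfies the exact identity u¹₃ = e^{3(1+i/ε)H}·(1 − (1 − e^{iθ})²·(1 + 2e^{iθ})), and consequently |u¹₃ − u(3H)| ≤ 3·θ²·e^{3H}, where u(3H) = e^{3(1+i/ε)H} is the exact solution of u̇ = (1 + i/ε)u, u(0) = 1, at time 3H. -/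

import Mathlib

open Complex

/-- For the expanding spiral `u̇ = (1 + i/ε) u`, `u(0) = 1`, with exact fine propagator
`𝓕 u = e^{(1+i/ε)H} u` and a coarse propagator `𝓒 u = e^H e^{i(H/ε+θ)} u` that is exact
in the amplitude but makes a phase error `θ` per step, the first parareal iterate at
`n = 3` satisfies `u¹₃ = e^{3(1+i/ε)H} (1 - (1 - e^{iθ})² (1 + 2 e^{iθ}))`, hence
`|u¹₃ - u(3H)| ≤ 3 θ² e^{3H}`. -/
theorem parareal_spiral_first_iteration
    (ε H θ : ℝ) (hε : 0 < ε) (hH : 0 < H)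
    (𝓕 𝓒 : ℂ → ℂ)
    (h𝓕 : ∀ z : ℂ, 𝓕 z = Complex.exp ((1 + Complex.I / (ε : ℂ)) * (H : ℂ)) * z)
    (h𝓒 : ∀ z : ℂ, 𝓒 z = (Real.exp H : ℂ)
      * Complex.exp (Complex.I * ((H : ℂ) / (ε : ℂ) + (θ : ℂ))) * z)
    (u : ℕ → ℕ → ℂ)
    (hinit : ∀ n : ℕ, u 0 n = 𝓒^[n] 1)
    (hzero : ∀ k : ℕ, u k 0 = 1)
    (hrec : ∀ k n : ℕ, u (k + 1) (n + 1)
      = 𝓒 (u (k + 1) n) + 𝓕 (u k n) - 𝓒 (u k n)) :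
    u 1 3 = Complex.exp (3 * (1 + Complex.I / (ε : ℂ)) * (H : ℂ))
        * (1 - (1 - Complex.exp (Complex.I * (θ : ℂ))) ^ 2
            * (1 + 2 * Complex.exp (Complex.I * (θ : ℂ))))
      ∧ ‖u 1 3 - Complex.exp (3 * (1 + Complex.I / (ε : ℂ)) * (H : ℂ))‖
        ≤ 3 * θ ^ 2 * Real.exp (3 * H) := by
  set F : ℂ := Complex.exp ((1 + Complex.I / (ε : ℂ)) * (H : ℂ)) with hFdef
  set g : ℂ := Complex.exp (Complex.I * (θ : ℂ)) with hgdef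
  -- the coarse propagator is F * g * z
  have hC : ∀ z : ℂ, 𝓒 z = F * g * z := by
    intro z
    rw [h𝓒 z, hFdef, hgdef]
    congr 1
    rw [Complex.ofReal_exp, ← Complex.exp_add, ← Complex.exp_add]
    congr 1
    ring
  -- the value of exp(3(1+i/ε)H)
  have hF3 : Complex.exp (3 * (1 + Complex.I / (ε : ℂ)) * (H : ℂ)) = F ^ 3 := by
    rw [hFdef, ← Complex.exp_nat_mul]
    congr 1
    push_cast
    ring
  -- compute iterates
  have h00 : u 0 0 = 1 := hzero 0
  have h01 : u 0 1 = F * g := by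
    rw [hinit 1]; simp [hC]
  have h02 : u 0 2 = F * g * (F * g) := by
    rw [hinit 2]
    simp [Function.iterate_succ_apply', hC]
  have h11 : u 1 1 = F := by
    rw [hrec 0 0, hzero 1, h00, h𝓕, hC]; ring
  have h12 : u 1 2 = 2 * F ^ 2 * g - F ^ 2 * g ^ 2 := by
    rw [hrec 0 1, h11, h01, h𝓕, hC, hC]; ring
  have h13 : u 1 3 = F ^ 3 * (1 - (1 - g) ^ 2 * (1 + 2 * g)) := by
    rw [hrec 0 2, h12, h02, h𝓕, hC, hC]; ring
  refine ⟨by rw [h13, hF3], ?_⟩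
  rw [h13, hF3]
  have hdiff : F ^ 3 * (1 - (1 - g) ^ 2 * (1 + 2 * g)) - F ^ 3
      = -(F ^ 3 * ((1 - g) ^ 2 * (1 + 2 * g))) := by ring
  rw [hdiff, norm_neg, norm_mul, norm_mul, norm_pow, norm_pow]
  have habsF : ‖F ^ 3‖ = Real.exp (3 * H) := by
    rw [norm_pow, hFdef, Complex.norm_exp, ← Real.exp_nat_mul]
    congr 1
    have : ((1 + Complex.I / (ε : ℂ)) * (H : ℂ)).re = H := by
      simp [Complex.add_re, Complex.div_re, Complex.mul_re]
    rw [this]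
    ring
  have h1g : ‖1 - g‖ ^ 2 ≤ θ ^ 2 := by
    rw [Complex.sq_norm, hgdef, mul_comm Complex.I ((θ : ℝ) : ℂ), Complex.exp_mul_I]
    have h1 : 1 - Real.cos θ ≤ θ ^ 2 / 2 := by
      nlinarith [Real.one_sub_sq_div_two_le_cos (x := θ)]
    have h2 : Real.sin θ ^ 2 + Real.cos θ ^ 2 = 1 := Real.sin_sq_add_cos_sq θ
    simp [Complex.normSq_apply, Complex.cos_ofReal_re, Complex.sin_ofReal_re]
    nlinarith
  have h12g : ‖1 + 2 * g‖ ≤ 3 := by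
    calc ‖1 + 2 * g‖ ≤ ‖(1:ℂ)‖ + ‖2 * g‖ :=
          norm_add_le _ _
      _ = 3 := by rw [norm_mul, hgdef, Complex.norm_exp]; simp; norm_num
  calc ‖F‖ ^ 3 * (‖1 - g‖ ^ 2 * ‖1 + 2 * g‖)
      ≤ Real.exp (3 * H) * (θ ^ 2 * 3) := by
        have hf : ‖F‖ ^ 3 = Real.exp (3 * H) := by
          rw [← norm_pow]; exact habsF
        rw [hf]
        have h2 : (0:ℝ) ≤ ‖1 + 2 * g‖ := norm_nonneg _
        have hmul : ‖1 - g‖ ^ 2 * ‖1 + 2 * g‖ ≤ θ ^ 2 * 3 :=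
          mul_le_mul h1g h12g h2 (sq_nonneg θ)
        exact mul_le_mul_of_nonneg_left hmul (Real.exp_pos _).le
    _ = 3 * θ ^ 2 * Real.exp (3 * H) := by ring
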